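/- Let x and y be n×n complex matrices with x* y = 0 and x y* = 0. Then for every real p ≥ 1, the Schatten p-norm satisfies ‖x + y‖_p^p = ‖x‖_p^p + ‖y‖_p^p. -/

import Mathlib

open ComplexOrder

/-- The Schatten `p`-norm of a complex matrix, computed via the eigenvalues of `xᴴ x`
(the `p/2`-powers of which are the `p`-th powers of the singular values of `x`). -/
noncomputable def schattenNorm {n : ℕ} (p : ℝ) (x : Matrix (Fin n) (Fin n) ℂ) : ℝ :=
  (∑ i, ((Matrix.posSemidef_conjTranspose_mul_self x).1.eigenvalues i) ^ (p / 2)) ^ (1 / p)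

namespace SchattenAux

variable {n : ℕ}

lemma orth_pow {A B : Matrix (Fin n) (Fin n) ℂ} (hAB : A * B = 0) (hBA : B * A = 0)
    (k : ℕ) : (A + B) ^ (k + 1) = A ^ (k + 1) + B ^ (k + 1) := by
  induction k with
  | zero => simp
  | succ k ih =>
    rw [pow_succ, ih, add_mul, mul_add, mul_add]
    have h1 : A ^ (k + 1) * B = 0 := by rw [pow_succ, mul_assoc, hAB, mul_zero]
    have h2 : B ^ (k + 1) * A = 0 := by rw [pow_succ, mul_assoc, hBA, mul_zero]
    rw [h1, h2, pow_succ, pow_succ]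
    abel

lemma pow_mul_zero {A B : Matrix (Fin n) (Fin n) ℂ} (hAB : A * B = 0) (k : ℕ) :
    A ^ (k + 1) * B = 0 := by
  rw [pow_succ, mul_assoc, hAB, mul_zero]

lemma orth_aeval {A B : Matrix (Fin n) (Fin n) ℂ} (hAB : A * B = 0) (hBA : B * A = 0)
    (q : Polynomial ℝ) (hq : q.coeff 0 = 0) :
    Polynomial.aeval (A + B) q = Polynomial.aeval A q + Polynomial.aeval B q := by
  rw [Polynomial.aeval_eq_sum_range, Polynomial.aeval_eq_sum_range,
    Polynomial.aeval_eq_sum_range, ← Finset.sum_add_distrib]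
  refine Finset.sum_congr rfl fun i _ => ?_
  match i with
  | 0 => simp [hq]
  | (k+1) => rw [orth_pow hAB hBA, smul_add]

lemma trace_cfc' {M : Matrix (Fin n) (Fin n) ℂ} (hM : M.IsHermitian) (f : ℝ → ℝ) :
    (hM.cfc f).trace = ∑ i, (f (hM.eigenvalues i) : ℂ) := by
  rw [Matrix.IsHermitian.cfc, Unitary.conjStarAlgAut_apply, Matrix.trace_mul_comm, ← mul_assoc]
  have : (star (hM.eigenvectorUnitary : Matrix (Fin n) (Fin n) ℂ)) *
      (hM.eigenvectorUnitary : Matrix (Fin n) (Fin n) ℂ) = 1 :=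
    Unitary.coe_star_mul_self _
  rw [this, one_mul, Matrix.trace_diagonal]
  rfl

lemma cfc_orth_add {A B : Matrix (Fin n) (Fin n) ℂ} (hA : A.IsHermitian) (hB : B.IsHermitian)
    (hAB : A * B = 0) (hBA : B * A = 0) (f : ℝ → ℝ) (hf0 : f 0 = 0) :
    cfc f (A + B) = cfc f A + cfc f B := by
  have hS : (A + B).IsHermitian := hA.add hB
  have fin1 := Matrix.finite_real_spectrum (A := A + B)
  have fin2 := Matrix.finite_real_spectrum (A := A)
  have fin3 := Matrix.finite_real_spectrum (A := B)
  classical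
  set s : Finset ℝ := insert 0 (fin1.toFinset ∪ fin2.toFinset ∪ fin3.toFinset) with hs
  set q : Polynomial ℝ := Lagrange.interpolate s id f with hq
  have hinj : Set.InjOn id (s : Set ℝ) := Function.injective_id.injOn
  have heval : ∀ t ∈ s, q.eval t = f t := fun t ht =>
    Lagrange.eval_interpolate_at_node f hinj ht
  have hq0 : q.coeff 0 = 0 := by
    rw [Polynomial.coeff_zero_eq_eval_zero, heval 0 (Finset.mem_insert_self _ _), hf0]
  have key : ∀ (M : Matrix (Fin n) (Fin n) ℂ), M.IsHermitian → spectrum ℝ M ⊆ (s : Set ℝ) →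
      cfc f M = Polynomial.aeval M q := by
    intro M hM hsub
    have hsa : IsSelfAdjoint M := hM
    rw [← cfc_polynomial q M hsa]
    exact cfc_congr fun t ht => (heval t (hsub ht)).symm
  have sub1 : spectrum ℝ (A + B) ⊆ (s : Set ℝ) := by
    intro t ht; simp only [hs, Finset.coe_insert, Finset.coe_union, Set.Finite.coe_toFinset, Set.mem_insert_iff, Set.mem_union]
    tauto
  have sub2 : spectrum ℝ A ⊆ (s : Set ℝ) := by
    intro t ht; simp only [hs, Finset.coe_insert, Finset.coe_union, Set.Finite.coe_toFinset, Set.mem_insert_iff, Set.mem_union]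
    tauto
  have sub3 : spectrum ℝ B ⊆ (s : Set ℝ) := by
    intro t ht; simp only [hs, Finset.coe_insert, Finset.coe_union, Set.Finite.coe_toFinset, Set.mem_insert_iff, Set.mem_union]
    tauto
  rw [key _ hS sub1, key _ hA sub2, key _ hB sub3, orth_aeval hAB hBA q hq0]

theorem schattenNorm_add_pow_of_orthogonal' {n : ℕ} (x y : Matrix (Fin n) (Fin n) ℂ)
    (h1 : x.conjTranspose * y = 0) (h2 : x * y.conjTranspose = 0)
    (p : ℝ) (hp : 1 ≤ p) :
    ((∑ i, ((Matrix.posSemidef_conjTranspose_mul_self (x+y)).1.eigenvalues i) ^ (p / 2)) ^ (1 / p)) ^ p =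
    ((∑ i, ((Matrix.posSemidef_conjTranspose_mul_self x).1.eigenvalues i) ^ (p / 2)) ^ (1 / p)) ^ p +
    ((∑ i, ((Matrix.posSemidef_conjTranspose_mul_self y).1.eigenvalues i) ^ (p / 2)) ^ (1 / p)) ^ p := by
  have hp0 : p ≠ 0 := by linarith
  set f : ℝ → ℝ := fun t => t ^ (p / 2) with hf
  have hf0 : f 0 = 0 := Real.zero_rpow (by positivity)
  have hS := (Matrix.posSemidef_conjTranspose_mul_self (x+y)).1
  have hA := (Matrix.posSemidef_conjTranspose_mul_self x).1
  have hB := (Matrix.posSemidef_conjTranspose_mul_self y).1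
  have hyx : y.conjTranspose * x = 0 := by
    have := congrArg Matrix.conjTranspose h1
    simpa [Matrix.conjTranspose_mul] using this
  have hxy' : y * x.conjTranspose = 0 := by
    have := congrArg Matrix.conjTranspose h2
    simpa [Matrix.conjTranspose_mul] using this
  have hSum : (x+y).conjTranspose * (x+y) =
      x.conjTranspose * x + y.conjTranspose * y := by
    rw [Matrix.conjTranspose_add, add_mul, mul_add, mul_add, h1, hyx]
    abel
  have hAB : (x.conjTranspose * x) * (y.conjTranspose * y) = 0 := by
    calc (x.conjTranspose * x) * (y.conjTranspose * y)
        = x.conjTranspose * (x * y.conjTranspose) * y := by noncomm_ring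
      _ = 0 := by rw [h2, mul_zero, zero_mul]
  have hBA : (y.conjTranspose * y) * (x.conjTranspose * x) = 0 := by
    calc (y.conjTranspose * y) * (x.conjTranspose * x)
        = y.conjTranspose * (y * x.conjTranspose) * x := by noncomm_ring
      _ = 0 := by rw [hxy', mul_zero, zero_mul]
  have hkey : (∑ i, f (hS.eigenvalues i)) = (∑ i, f (hA.eigenvalues i)) +
      (∑ i, f (hB.eigenvalues i)) := by
    have e1 := trace_cfc' hS f
    have e2 := trace_cfc' hA f
    have e3 := trace_cfc' hB f
    have ecfc : hS.cfc f = hA.cfc f + hB.cfc f := by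
      rw [← Matrix.IsHermitian.cfc_eq, ← Matrix.IsHermitian.cfc_eq,
        ← Matrix.IsHermitian.cfc_eq]
      calc cfc f ((x+y).conjTranspose * (x+y))
          = cfc f (x.conjTranspose * x + y.conjTranspose * y) := by rw [hSum]
        _ = _ := cfc_orth_add hA hB hAB hBA f hf0
    have : (∑ i, (f (hS.eigenvalues i) : ℂ)) = (∑ i, (f (hA.eigenvalues i) : ℂ)) +
        (∑ i, (f (hB.eigenvalues i) : ℂ)) := by
      rw [← e1, ← e2, ← e3, ecfc, Matrix.trace_add]
    exact_mod_cast this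
  have hnn : ∀ {m : Matrix (Fin n) (Fin n) ℂ} (hm : m.PosSemidef),
      0 ≤ ∑ i, f (hm.1.eigenvalues i) := fun hm =>
    Finset.sum_nonneg fun i _ => Real.rpow_nonneg (hm.eigenvalues_nonneg i) _
  have hpow : ∀ (T : ℝ), 0 ≤ T → (T ^ (1/p)) ^ p = T := fun T hT => by
    rw [← Real.rpow_mul hT, one_div_mul_cancel hp0, Real.rpow_one]
  rw [hpow _ (hnn (Matrix.posSemidef_conjTranspose_mul_self (x+y))),
    hpow _ (hnn (Matrix.posSemidef_conjTranspose_mul_self x)),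
    hpow _ (hnn (Matrix.posSemidef_conjTranspose_mul_self y))]
  exact hkey

end SchattenAux

/-- If `xᴴ y = 0` and `x yᴴ = 0`, then `‖x + y‖_p ^ p = ‖x‖_p ^ p + ‖y‖_p ^ p` for every
Schatten `p`-norm with `p ≥ 1`. -/
theorem schattenNorm_add_pow_of_orthogonal {n : ℕ} (x y : Matrix (Fin n) (Fin n) ℂ)
    (h1 : x.conjTranspose * y = 0) (h2 : x * y.conjTranspose = 0)
    (p : ℝ) (hp : 1 ≤ p) :
    schattenNorm p (x + y) ^ p = schattenNorm p x ^ p + schattenNorm p y ^ p := by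
  simp only [schattenNorm]
  exact SchattenAux.schattenNorm_add_pow_of_orthogonal' x y h1 h2 p hp
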